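/- Let β > 0, γ > 1/2, I = (−π/(2√β), π/(2√β)), and let ψ_γ(k) := κ(γ)^{−1/2} cos(√β k)^γ for k ∈ I (extended by 0 outside I), where κ(γ) := ∫_I cos(√β k)^{2γ} dk. With p(k) = tan(√β k)/√β, define Var x := ∫_I |ψ_γ'(k)|² dk and Var p := ∫_I p(k)² ψ_γ(k)² dk (the first moments of x and p vanish for these states). Then Var x · Var p = (1/4)(1 + β Var p)², i.e. the states ψ_γ saturate the uncertainty relation Var x · Var p ≥ (1/4)(1 + β Var p)² for every γ > 1/2. -/

import Mathlib

open MeasureTheory Set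
open scoped Classical
set_option maxHeartbeats 1000000

/-- The states `ψ_γ(k) = κ(γ)^{−1/2} cos(√β k)^γ` (γ > 1/2) on
`I = (−π/(2√β), π/(2√β))`, with `p(k) = tan(√β k)/√β`, saturate the
uncertainty relation: `Var x · Var p = (1/4)(1 + β Var p)²`. -/
theorem optimal_states_saturate
    (β : ℝ) (hβ : 0 < β) (γ : ℝ) (hγ : 1 / 2 < γ)
    (I : Set ℝ)
    (hI : I = Set.Ioo (-(Real.pi / (2 * Real.sqrt β))) (Real.pi / (2 * Real.sqrt β)))
    (κ : ℝ) (hκ : κ = ∫ k in I, Real.cos (Real.sqrt β * k) ^ (2 * γ))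
    (ψ : ℝ → ℝ)
    (hψ : ∀ k : ℝ, ψ k =
      if k ∈ I then κ ^ (-(1 / 2) : ℝ) * Real.cos (Real.sqrt β * k) ^ γ else 0)
    (p : ℝ → ℝ)
    (hp : ∀ k : ℝ, p k = Real.tan (Real.sqrt β * k) / Real.sqrt β)
    (varx varp : ℝ)
    (hvx : varx = ∫ k in I, (deriv ψ k) ^ 2)
    (hvp : varp = ∫ k in I, p k ^ 2 * ψ k ^ 2) :
    varx * varp = (1 / 4) * (1 + β * varp) ^ 2 := by
  set s : ℝ := Real.sqrt β with hsβ
  have hs : 0 < s := Real.sqrt_pos.mpr hβ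
  have hs2 : s ^ 2 = β := Real.sq_sqrt hβ.le
  set L : ℝ := Real.pi / (2 * s) with hL
  have hLpos : 0 < L := div_pos Real.pi_pos (by linarith)
  have hsL : s * L = Real.pi / 2 := by
    rw [hL]; field_simp
  have h2γ : (0:ℝ) < 2 * γ - 1 := by linarith
  subst hI
  -- positivity of cosine on the interval
  have hcospos : ∀ k ∈ Ioo (-L) L, 0 < Real.cos (s * k) := by
    intro k hk
    apply Real.cos_pos_of_mem_Ioo
    constructor
    · have := mul_lt_mul_of_pos_left hk.1 hs
      rw [mul_neg, hsL] at this
      simpa using this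
    · have := mul_lt_mul_of_pos_left hk.2 hs
      rwa [hsL] at this
  -- derivative of cos (s x)
  have hcderiv : ∀ k : ℝ, HasDerivAt (fun x : ℝ => Real.cos (s * x)) (-Real.sin (s * k) * s) k := by
    intro k
    have h1 : HasDerivAt (fun x : ℝ => s * x) s k := by
      simpa using (hasDerivAt_id k).const_mul s
    exact (Real.hasDerivAt_cos (s * k)).comp k h1
  have hsderiv : ∀ k : ℝ, HasDerivAt (fun x : ℝ => Real.sin (s * x)) (Real.cos (s * k) * s) k := by
    intro k
    have h1 : HasDerivAt (fun x : ℝ => s * x) s k := by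
      simpa using (hasDerivAt_id k).const_mul s
    exact (Real.hasDerivAt_sin (s * k)).comp k h1
  -- the key integrand g
  set g : ℝ → ℝ := fun k => Real.sin (s * k) ^ 2 * Real.cos (s * k) ^ (2 * γ - 2) with hg
  -- integrability of g
  have hgcont : ContinuousOn g (Ioo (-L) L) := by
    intro k hk
    apply ContinuousAt.continuousWithinAt
    have h1 : ContinuousAt (fun x : ℝ => Real.cos (s * x)) k :=
      (Real.continuous_cos.comp (continuous_const.mul continuous_id)).continuousAt
    have h2 : ContinuousAt (fun x : ℝ => Real.cos (s * x) ^ (2 * γ - 2)) k :=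
      h1.rpow_const (Or.inl (hcospos k hk).ne')
    exact ((Real.continuous_sin.comp (continuous_const.mul continuous_id)).pow 2).continuousAt.mul h2
  have hgmeas : AEStronglyMeasurable g (volume.restrict (Ioo (-L) L)) :=
    hgcont.aestronglyMeasurable measurableSet_Ioo
  have hgnonneg : ∀ k ∈ Ioo (-L) L, 0 ≤ g k := by
    intro k hk
    exact mul_nonneg (sq_nonneg _) (Real.rpow_nonneg (hcospos k hk).le _)
  -- lower bound on cos
  have hclow : ∀ k ∈ Ioo (-L) L, 2 / Real.pi * s * (L - |k|) ≤ Real.cos (s * k) := by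
    intro k hk
    have hkabs : |k| < L := abs_lt.mpr ⟨hk.1, hk.2⟩
    have h0 : 0 ≤ s * |k| := by positivity
    have h1 : s * |k| ≤ Real.pi / 2 := by
      rw [← hsL]; exact mul_le_mul_of_nonneg_left hkabs.le hs.le
    have h2 : Real.cos (s * k) = Real.cos (s * |k|) := by
      rw [← Real.cos_abs (s * k), abs_mul, abs_of_pos hs]
    rw [h2]
    have h3 := Real.one_sub_mul_le_cos h0 h1
    have h4 : 2 / Real.pi * s * (L - |k|) = 1 - 2 / Real.pi * (s * |k|) := by
      have hπ : Real.pi ≠ 0 := Real.pi_ne_zero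
      field_simp [hL]
      linear_combination 2 * hsL
    linarith
  have hgint : IntervalIntegrable g volume (-L) L := by
    rw [intervalIntegrable_iff_integrableOn_Ioo_of_le (by linarith)]
    rcases le_or_gt 0 (2 * γ - 2) with hr | hr
    · -- bounded case
      apply Integrable.mono' (g := fun _ : ℝ => (1:ℝ))
      · exact integrableOn_const (by simp [Real.volume_Ioo])
      · exact hgmeas
      · rw [ae_restrict_iff' measurableSet_Ioo]
        filter_upwards with k hk
        have h1 : Real.cos (s * k) ^ (2 * γ - 2) ≤ 1 :=
          Real.rpow_le_one (hcospos k hk).le (Real.cos_le_one _) hr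
        have h2 : Real.sin (s * k) ^ 2 ≤ 1 := Real.sin_sq_le_one _
        rw [Real.norm_eq_abs, abs_of_nonneg (hgnonneg k hk)]
        calc g k ≤ 1 * 1 := by
              apply mul_le_mul h2 h1 (Real.rpow_nonneg (hcospos k hk).le _) (by norm_num)
          _ = 1 := by norm_num
    · -- singular case
      set c : ℝ := 2 / Real.pi * s with hc
      have hcpos : 0 < c := by positivity
      have hr1 : (-1:ℝ) < 2 * γ - 2 := by linarith
      have hmaj : IntegrableOn
          (fun k : ℝ => c ^ (2 * γ - 2) * ((L - k) ^ (2 * γ - 2) + (L + k) ^ (2 * γ - 2)))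
          (Ioo (-L) L) volume := by
        rw [← intervalIntegrable_iff_integrableOn_Ioo_of_le (by linarith)]
        apply IntervalIntegrable.const_mul
        apply IntervalIntegrable.add
        · have h := (intervalIntegral.intervalIntegrable_rpow' (a := 0) (b := 2 * L) hr1).comp_sub_left L
          have e1 : L - 2 * L = -L := by ring
          have e2 : L - 0 = L := by ring
          rw [e1, e2] at h
          exact h.symm
        · have h := (intervalIntegral.intervalIntegrable_rpow' (a := 0) (b := 2 * L) hr1).comp_sub_right (-L)
          have h2 : ∀ x : ℝ, x - (-L) = L + x := by intro x; ring
          simp only [h2] at h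
          have e1 : 0 + -L = -L := by ring
          have e2 : 2 * L + -L = L := by ring
          rw [e1, e2] at h
          exact h
      apply Integrable.mono' hmaj hgmeas
      rw [ae_restrict_iff' measurableSet_Ioo]
      filter_upwards with k hk
      have hkabs : |k| < L := abs_lt.mpr ⟨hk.1, hk.2⟩
      have hLk : 0 < L - |k| := by linarith
      rw [Real.norm_eq_abs, abs_of_nonneg (hgnonneg k hk)]
      have h1 : g k ≤ Real.cos (s * k) ^ (2 * γ - 2) := by
        simp only [hg]
        have h0 := Real.rpow_nonneg (hcospos k hk).le (2 * γ - 2)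
        nlinarith [Real.sin_sq_le_one (s * k), sq_nonneg (Real.sin (s * k))]
      have h2 : Real.cos (s * k) ^ (2 * γ - 2) ≤ (c * (L - |k|)) ^ (2 * γ - 2) :=
        Real.rpow_le_rpow_of_nonpos (by positivity) (hclow k hk) hr.le
      have h3 : (c * (L - |k|)) ^ (2 * γ - 2) = c ^ (2 * γ - 2) * (L - |k|) ^ (2 * γ - 2) :=
        Real.mul_rpow hcpos.le hLk.le
      have h4 : (L - |k|) ^ (2 * γ - 2) ≤ (L - k) ^ (2 * γ - 2) + (L + k) ^ (2 * γ - 2) := by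
        rcases le_or_gt 0 k with hk0 | hk0
        · rw [abs_of_nonneg hk0]
          have : (0:ℝ) ≤ (L + k) ^ (2 * γ - 2) := Real.rpow_nonneg (by linarith) _
          linarith
        · rw [abs_of_neg hk0]
          have h5 : L - -k = L + k := by ring
          rw [h5]
          have : (0:ℝ) ≤ (L - k) ^ (2 * γ - 2) := Real.rpow_nonneg (by linarith) _
          linarith
      calc g k ≤ (c * (L - |k|)) ^ (2 * γ - 2) := h1.trans h2
        _ = c ^ (2 * γ - 2) * (L - |k|) ^ (2 * γ - 2) := h3
        _ ≤ c ^ (2 * γ - 2) * ((L - k) ^ (2 * γ - 2) + (L + k) ^ (2 * γ - 2)) := by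
            apply mul_le_mul_of_nonneg_left h4 (Real.rpow_nonneg hcpos.le _)
  -- integrability of cos^{2γ}
  have hAcont : Continuous (fun k : ℝ => Real.cos (s * k) ^ (2 * γ)) := by
    have h1 : Continuous (fun x : ℝ => x ^ (2 * γ)) := Real.continuous_rpow_const (by linarith)
    exact h1.comp (Real.continuous_cos.comp (continuous_const.mul continuous_id))
  have hAint : IntervalIntegrable (fun k : ℝ => Real.cos (s * k) ^ (2 * γ)) volume (-L) L :=
    hAcont.intervalIntegrable _ _
  -- FTC: key identity
  have hkey : (∫ k in (-L)..L, Real.cos (s * k) ^ (2 * γ)) =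
      (2 * γ - 1) * ∫ k in (-L)..L, g k := by
    set F : ℝ → ℝ := fun k => Real.sin (s * k) * Real.cos (s * k) ^ (2 * γ - 1) with hF
    set F' : ℝ → ℝ := fun k =>
      s * Real.cos (s * k) ^ (2 * γ) - (2 * γ - 1) * s * g k with hF'
    have hFcont : Continuous F := by
      have h1 : Continuous (fun x : ℝ => x ^ (2 * γ - 1)) :=
        Real.continuous_rpow_const (by linarith)
      exact (Real.continuous_sin.comp (continuous_const.mul continuous_id)).mul
        (h1.comp (Real.continuous_cos.comp (continuous_const.mul continuous_id)))
    have hFderiv : ∀ k ∈ Ioo (-L) L, HasDerivAt F (F' k) k := by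
      intro k hk
      have hck := hcospos k hk
      have h1 : HasDerivAt (fun x : ℝ => Real.cos (s * x) ^ (2 * γ - 1))
          (-Real.sin (s * k) * s * (2 * γ - 1) * Real.cos (s * k) ^ (2 * γ - 1 - 1)) k :=
        (hcderiv k).rpow_const (Or.inl hck.ne')
      have h2 : HasDerivAt (fun x : ℝ => Real.sin (s * x) * Real.cos (s * x) ^ (2 * γ - 1))
          (Real.cos (s * k) * s * Real.cos (s * k) ^ (2 * γ - 1) + Real.sin (s * k) *
            (-Real.sin (s * k) * s * (2 * γ - 1) * Real.cos (s * k) ^ (2 * γ - 1 - 1))) k :=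
        (hsderiv k).mul h1
      have h3 : Real.cos (s * k) ^ (2 * γ) = Real.cos (s * k) * Real.cos (s * k) ^ (2 * γ - 1) := by
        have h := Real.rpow_add hck 1 (2 * γ - 1)
        rw [Real.rpow_one] at h
        rw [← h]
        congr 1
        ring
      have h4 : Real.cos (s * k) ^ (2 * γ - 1 - 1) = Real.cos (s * k) ^ (2 * γ - 2) := by
        congr 1
        ring
      convert h2 using 1
      simp only [hF', hg]
      rw [h3, h4]
      ring
    have hF'int : IntervalIntegrable F' volume (-L) L := by
      exact (hAint.const_mul s).sub (hgint.const_mul ((2 * γ - 1) * s))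
    have hFTC := intervalIntegral.integral_eq_sub_of_hasDeriv_right_of_le (by linarith : -L ≤ L)
      hFcont.continuousOn (fun x hx => (hFderiv x hx).hasDerivWithinAt) hF'int
    have hFL : F L = 0 := by
      rw [hF]; simp only []
      rw [hsL, Real.cos_pi_div_two, Real.zero_rpow (by linarith : 2 * γ - 1 ≠ 0), mul_zero]
    have hFnL : F (-L) = 0 := by
      rw [hF]; simp only []
      rw [mul_neg, hsL, Real.cos_neg, Real.cos_pi_div_two,
        Real.zero_rpow (by linarith : 2 * γ - 1 ≠ 0), mul_zero]
    rw [hFL, hFnL, sub_zero] at hFTC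
    have hsplit : (∫ k in (-L)..L, F' k) =
        s * (∫ k in (-L)..L, Real.cos (s * k) ^ (2 * γ)) -
        (2 * γ - 1) * s * (∫ k in (-L)..L, g k) := by
      rw [hF']
      rw [intervalIntegral.integral_sub (hAint.const_mul s) (hgint.const_mul ((2 * γ - 1) * s)),
        intervalIntegral.integral_const_mul, intervalIntegral.integral_const_mul]
    rw [hsplit] at hFTC
    have := sub_eq_zero.mp hFTC
    field_simp at this ⊢
    nlinarith [this, hs]
  -- set integrals to interval integrals
  have hconv : ∀ f : ℝ → ℝ, (∫ k in Ioo (-L) L, f k) = ∫ k in (-L)..L, f k := by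
    intro f
    rw [intervalIntegral.integral_of_le (by linarith : -L ≤ L), ← integral_Ioc_eq_integral_Ioo]
  -- κ in interval form, positivity
  set B : ℝ := ∫ k in (-L)..L, g k with hB
  have hκval : κ = ∫ k in (-L)..L, Real.cos (s * k) ^ (2 * γ) := by rw [hκ, hconv]
  have hκpos : 0 < κ := by
    rw [hκval]
    exact intervalIntegral.intervalIntegral_pos_of_pos_on hAint
      (fun x hx => Real.rpow_pos_of_pos (hcospos x hx) _) (by linarith)
  have hκB : κ = (2 * γ - 1) * B := by rw [hκval, hkey]
  -- rpow squaring helpers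
  have hc0sq : (κ ^ (-(1 / 2) : ℝ)) ^ 2 = κ⁻¹ := by
    rw [← Real.rpow_natCast (κ ^ (-(1 / 2) : ℝ)) 2, ← Real.rpow_mul hκpos.le]
    norm_num [Real.rpow_neg_one]
  -- variance of x
  have hvx' : varx = κ⁻¹ * γ ^ 2 * β * B := by
    rw [hvx]
    have heq : EqOn (fun k => (deriv ψ k) ^ 2) (fun k => (κ⁻¹ * γ ^ 2 * β) * g k) (Ioo (-L) L) := by
      intro k hk
      have hck := hcospos k hk
      have hev : ψ =ᶠ[nhds k] fun x => κ ^ (-(1 / 2) : ℝ) * Real.cos (s * x) ^ γ := by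
        filter_upwards [isOpen_Ioo.mem_nhds hk] with x hx
        rw [hψ x, if_pos hx]
      have hd : HasDerivAt (fun x => κ ^ (-(1 / 2) : ℝ) * Real.cos (s * x) ^ γ)
          (κ ^ (-(1 / 2) : ℝ) * (-Real.sin (s * k) * s * γ * Real.cos (s * k) ^ (γ - 1))) k :=
        ((hcderiv k).rpow_const (Or.inl hck.ne')).const_mul _
      have hderivk : deriv ψ k =
          κ ^ (-(1 / 2) : ℝ) * (-Real.sin (s * k) * s * γ * Real.cos (s * k) ^ (γ - 1)) := by
        rw [hev.deriv_eq, hd.deriv]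
      have hcossq : (Real.cos (s * k) ^ (γ - 1)) ^ 2 = Real.cos (s * k) ^ (2 * γ - 2) := by
        rw [← Real.rpow_natCast (Real.cos (s * k) ^ (γ - 1)) 2, ← Real.rpow_mul hck.le]
        congr 1
        push_cast
        ring
      show (deriv ψ k) ^ 2 = (κ⁻¹ * γ ^ 2 * β) * g k
      rw [hderivk, hg]
      have expand : (κ ^ (-(1 / 2) : ℝ) *
          (-Real.sin (s * k) * s * γ * Real.cos (s * k) ^ (γ - 1))) ^ 2 =
          (κ ^ (-(1 / 2) : ℝ)) ^ 2 * γ ^ 2 * s ^ 2 *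
            (Real.sin (s * k) ^ 2 * (Real.cos (s * k) ^ (γ - 1)) ^ 2) := by ring
      rw [expand, hc0sq, hcossq, hs2]
    calc (∫ k in Ioo (-L) L, (deriv ψ k) ^ 2)
        = ∫ k in Ioo (-L) L, (κ⁻¹ * γ ^ 2 * β) * g k :=
          setIntegral_congr_fun measurableSet_Ioo heq
      _ = ∫ k in (-L)..L, (κ⁻¹ * γ ^ 2 * β) * g k := hconv _
      _ = κ⁻¹ * γ ^ 2 * β * B := by
          rw [intervalIntegral.integral_const_mul, ← hB]
  -- variance of p
  have hvp' : varp = (κ⁻¹ / β) * B := by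
    rw [hvp]
    have heq : EqOn (fun k => p k ^ 2 * ψ k ^ 2) (fun k => (κ⁻¹ / β) * g k) (Ioo (-L) L) := by
      intro k hk
      have hck := hcospos k hk
      have hψk : ψ k = κ ^ (-(1 / 2) : ℝ) * Real.cos (s * k) ^ γ := by
        rw [hψ k, if_pos hk]
      have hcossq : (Real.cos (s * k) ^ (γ : ℝ)) ^ 2 = Real.cos (s * k) ^ (2 * γ) := by
        rw [← Real.rpow_natCast (Real.cos (s * k) ^ (γ : ℝ)) 2, ← Real.rpow_mul hck.le]
        congr 1
        push_cast
        ring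
      have hcos2 : Real.cos (s * k) ^ (2 * γ) =
          Real.cos (s * k) ^ (2 * γ - 2) * Real.cos (s * k) ^ 2 := by
        rw [← Real.rpow_natCast (Real.cos (s * k)) 2, ← Real.rpow_add hck]
        congr 1
        push_cast
        ring
      show p k ^ 2 * ψ k ^ 2 = (κ⁻¹ / β) * g k
      simp only [hg]
      rw [hp k, hψk, Real.tan_eq_sin_div_cos]
      rw [div_pow, div_pow, mul_pow, hc0sq, hcossq, hcos2, hs2]
      field_simp
    calc (∫ k in Ioo (-L) L, p k ^ 2 * ψ k ^ 2)
        = ∫ k in Ioo (-L) L, (κ⁻¹ / β) * g k :=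
          setIntegral_congr_fun measurableSet_Ioo heq
      _ = ∫ k in (-L)..L, (κ⁻¹ / β) * g k := hconv _
      _ = (κ⁻¹ / β) * B := by
          rw [intervalIntegral.integral_const_mul, ← hB]
  -- final algebra
  have hBval : B = κ / (2 * γ - 1) := by
    rw [hκB]; field_simp
  rw [hvx', hvp', hBval]
  have h2γne : 2 * γ - 1 ≠ 0 := h2γ.ne'
  field_simp
  have h2γne' : γ * 2 - 1 ≠ 0 := by intro h; linarith
  field_simp
  ring
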